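/- A G-grading of a C*-algebra A is strong if and only if cl span(A_g A_{g⁻¹}) = A_e for every g ∈ G. -/

import Mathlib

open scoped NNReal
open Unitization Submodule Topology

section Aux

variable {A : Type*} [NonUnitalCStarAlgebra A] [PartialOrder A] [StarOrderedRing A]

/-- `cfcₙ` (over `ℝ`) of an element of a closed non-unital star subalgebra stays in it. -/
lemma cfcnReal_mem_of_mem (S : NonUnitalStarSubalgebra ℂ A) (hS : IsClosed (S : Set A))
    {a : A} (haS : a ∈ S) (f : ℝ → ℝ) : cfcₙ f a ∈ S := by
  by_cases ha : IsSelfAdjoint a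
  · by_cases hf : ContinuousOn f (quasispectrum ℝ a)
    · by_cases hf0 : f 0 = 0
      · rw [cfcₙ_apply f a hf hf0 ha]
        have hcpt : CompactSpace (quasispectrum ℝ a) :=
          isCompact_iff_compactSpace.mp
            (NonUnitalContinuousFunctionalCalculus.isCompact_quasispectrum a)
        set G : ContinuousMapZero (quasispectrum ℝ a) ℝ := ⟨⟨_, hf.restrict⟩, hf0⟩
        clear_value G
        have h0 : ((0 : quasispectrum ℝ a) : ℝ) = 0 := rfl
        induction G using ContinuousMapZero.induction_on_of_compact with
        | zero => rw [map_zero]; exact zero_mem S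
        | id =>
            rw [cfcₙHom_id ha]
            exact haS
        | star_id =>
            rw [map_star, cfcₙHom_id ha]
            exact star_mem haS
        | add f g hfm hgm => rw [map_add]; exact S.add_mem hfm hgm
        | mul f g hfm hgm => rw [map_mul]; exact S.mul_mem hfm hgm
        | smul r f hfm =>
            rw [map_smul, ← Complex.coe_smul]
            exact S.smul_mem _ hfm
        | frequently f hfreq =>
            have hcl : IsClosed {g : ContinuousMapZero (quasispectrum ℝ a) ℝ |
                cfcₙHom ha g ∈ S} := hS.preimage (cfcₙHom_isClosedEmbedding ha).continuous
            have := mem_closure_iff_frequently.mpr hfreq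
            exact closure_minimal (fun g hg => hg) hcl this
      · rw [cfcₙ_apply_of_not_map_zero a hf0]; exact S.zero_mem
    · rw [cfcₙ_apply_of_not_continuousOn a hf]; exact S.zero_mem
  · rw [cfcₙ_apply_of_not_predicate a ha]; exact S.zero_mem

/-- The key approximation: `c` is approximated by `c * x` with
`x = cfcₙ f (star c * c)` for a suitable `f`. -/
lemma approx_mul_cfcn (c : A) {ε : ℝ≥0} (hε : 0 < ε) :
    ∃ x : A, 0 ≤ x ∧
      x = cfcₙ (fun t : ℝ≥0 ↦ 1 - (1 + ε⁻¹ ^ 2 * t)⁻¹) (star c * c) ∧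
      ‖c - c * x‖₊ < ε := by
  set s : ℝ≥0 := ε⁻¹ ^ 2 with hs_def
  have hs : 0 < s := by positivity
  set b : A := star c * c with hb_def
  have hb : 0 ≤ b := star_mul_self_nonneg c
  set g : ℝ≥0 → ℝ≥0 := fun t ↦ 1 - (1 + s * t)⁻¹ with hg_def
  have hgc : Continuous g := by
    rw [← continuousOn_univ]
    fun_prop (disch := intro _ _; positivity)
  have hg0 : g 0 = 0 := by simp [hg_def]
  set x : A := cfcₙ g b with hx_def
  have hx0 : 0 ≤ x := cfcₙ_nonneg_of_predicate
  refine ⟨x, hx0, rfl, ?_⟩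
  -- pass to the unitization
  have hb' : (0 : Unitization ℂ A) ≤ (b : Unitization ℂ A) := inr_nonneg_iff.mpr hb
  have hx' : ((x : A) : Unitization ℂ A) = cfc g (b : Unitization ℂ A) :=
    Unitization.nnreal_cfcₙ_eq_cfc_inr b g hg0
  set k : ℝ≥0 → ℝ≥0 := fun t ↦ (1 + s * t)⁻¹ with hk_def
  have hkc : Continuous k := by
    rw [← continuousOn_univ]
    fun_prop (disch := intro _ _; positivity)
  set C : Unitization ℂ A := (c : Unitization ℂ A) with hC_def
  set X : Unitization ℂ A := cfc g (b : Unitization ℂ A) with hX_def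
  have hX0 : 0 ≤ X := cfc_nonneg_of_predicate
  have h1X : 1 - X = cfc k (b : Unitization ℂ A) := by
    have h1 : (1 : Unitization ℂ A) = cfc (fun _ : ℝ≥0 ↦ 1) (b : Unitization ℂ A) :=
      (cfc_const_one ℝ≥0 _).symm
    rw [hX_def, h1, ← cfc_tsub (fun _ ↦ 1) g (b : Unitization ℂ A)
      (fun t _ ↦ tsub_le_self) hb' (by fun_prop) hgc.continuousOn]
    refine cfc_congr fun t _ ↦ ?_
    simp only [hg_def, hk_def]
    refine tsub_tsub_cancel_of_le ?_
    have h1le : (1 : ℝ≥0) ≤ 1 + s * t := le_add_of_nonneg_right (zero_le)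
    simpa using inv_anti₀ one_pos h1le
  have hsa1X : IsSelfAdjoint (1 - X) := by
    rw [h1X]; exact (cfc_nonneg_of_predicate (a := (b : Unitization ℂ A))).isSelfAdjoint
  have hbC : star C * C = (b : Unitization ℂ A) := by
    rw [hC_def, hb_def, inr_mul, inr_star]
  -- the key pointwise estimate
  have key : ∀ t : ℝ≥0, k t * t * k t ≤ (ε / 2) ^ 2 := by
    intro t
    have hs' : (0 : ℝ) < (s : ℝ) := hs
    have hε2 : ((ε : ℝ) / 2) ^ 2 = ((s : ℝ))⁻¹ / 2 ^ 2 := by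
      rw [div_pow]
      congr 1
      rw [hs_def]
      push_cast
      rw [inv_pow, inv_inv]
    rw [← NNReal.coe_le_coe]
    push_cast
    simp only [hk_def]
    push_cast
    have hpos : (0 : ℝ) < 1 + (s : ℝ) * t := by positivity
    rw [mul_comm ((1 + (s : ℝ) * t)⁻¹) (t : ℝ), mul_assoc, ← mul_inv, ← sq,
      ← div_eq_mul_inv, hε2, div_le_div_iff₀ (by positivity) (by norm_num),
      ← div_eq_inv_mul, le_div_iff₀ hs']
    ring_nf
    nlinarith [sq_nonneg (1 - (s : ℝ) * (t : ℝ)), (t : ℝ≥0).coe_nonneg]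
  -- norm computation
  have hw : ((c - c * x : A) : Unitization ℂ A) = C * (1 - X) := by
    rw [inr_sub ℂ, inr_mul ℂ, hx', mul_one_sub]
  have hprod : star (C * (1 - X)) * (C * (1 - X))
      = cfc (fun t : ℝ≥0 ↦ k t * t * k t) (b : Unitization ℂ A) := by
    rw [star_mul, hsa1X.star_eq, ← mul_assoc, mul_assoc (1 - X) (star C) C, hbC, h1X]
    nth_rewrite 2 [← cfc_id' ℝ≥0 (b : Unitization ℂ A)]
    rw [← cfc_mul _ _ _ hkc.continuousOn (continuousOn_id' _),
      ← cfc_mul (fun x => k x * x) _ _ (hkc.continuousOn.mul (continuousOn_id' _)) hkc.continuousOn]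
  have hnorm : ‖c - c * x‖₊ ^ 2 ≤ (ε / 2) ^ 2 := by
    have hinr : ‖c - c * x‖₊ = ‖((c - c * x : A) : Unitization ℂ A)‖₊ :=
      (nnnorm_inr (𝕜 := ℂ) _).symm
    rw [hinr, hw, sq, ← CStarRing.nnnorm_star_mul_self, hprod]
    exact nnnorm_cfc_nnreal_le fun t _ ↦ key t
  have hle : ‖c - c * x‖₊ ≤ ε / 2 :=
    (pow_le_pow_iff_left₀ (zero_le) (zero_le) two_ne_zero).mp hnorm
  exact lt_of_le_of_lt hle (NNReal.half_lt_self hε.ne')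

end Aux

/-- A `G`-grading of a closed subspace `S` of a C*-algebra `A`: closed subspaces `part g`
spanning a dense subspace of `S`, with `part g * part h ⊆ part (g*h)`,
`(part g)* = part g⁻¹`, `part 1` a C*-subalgebra, together with a positive norm-decreasing
conditional expectation onto `part 1`. Taking `S = ⊤` gives a `G`-grading of `A` itself. -/
structure GradedCStar (G : Type*) [Group G] (A : Type*) [NonUnitalCStarAlgebra A]
    [PartialOrder A] [StarOrderedRing A] (S : Submodule ℂ A) where
  part : G → Submodule ℂ A
  part_le : ∀ g, part g ≤ S
  closed : ∀ g, IsClosed (part g : Set A)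
  mul_mem : ∀ {g h : G} {a b : A}, a ∈ part g → b ∈ part h → a * b ∈ part (g * h)
  star_mem : ∀ {g : G} {a : A}, a ∈ part g → star a ∈ part g⁻¹
  span_dense : (⨆ g, part g).topologicalClosure = S
  E : A →ₗ[ℂ] A
  E_pos : ∀ a ∈ S, 0 ≤ a → 0 ≤ E a
  E_norm : ∀ a ∈ S, ‖E a‖ ≤ ‖a‖
  E_mem : ∀ a ∈ S, E a ∈ part 1
  E_id : ∀ a ∈ part 1, E a = a
  E_zero : ∀ {g : G}, g ≠ 1 → ∀ a ∈ part g, E a = 0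

def GradedCStar.IsStrong {G : Type*} [Group G] {A : Type*} [NonUnitalCStarAlgebra A]
    [PartialOrder A] [StarOrderedRing A] {S : Submodule ℂ A}
    (gr : GradedCStar G A S) : Prop :=
  ∀ g h : G, (Submodule.span ℂ {x : A | ∃ a ∈ gr.part g, ∃ b ∈ gr.part h,
      x = a * b}).topologicalClosure = gr.part (g * h)

/-- a `G`-grading of a C*-algebra `A` is strong if and only if
`cl span (A_g A_{g⁻¹}) = A_e` for every `g ∈ G`. -/
theorem isStrong_iff_forall_mul_inv
    {G : Type*} [Group G] {A : Type*} [NonUnitalCStarAlgebra A]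
    [PartialOrder A] [StarOrderedRing A]
    (gr : GradedCStar G A ⊤) :
    gr.IsStrong ↔ ∀ g : G,
      (Submodule.span ℂ {x : A | ∃ a ∈ gr.part g, ∃ b ∈ gr.part g⁻¹,
        x = a * b}).topologicalClosure = gr.part 1 := by
  constructor
  · intro hS g
    have := hS g g⁻¹
    rwa [mul_inv_cancel] at this
  · intro H g h
    set T : Submodule ℂ A := (Submodule.span ℂ {x : A | ∃ a ∈ gr.part g, ∃ b ∈ gr.part h,
        x = a * b}).topologicalClosure with hT_def
    have hTclosed : IsClosed (T : Set A) := Submodule.isClosed_topologicalClosure _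
    apply le_antisymm
    · refine Submodule.topologicalClosure_minimal _ (Submodule.span_le.mpr ?_) (gr.closed _)
      rintro x ⟨a, ha, b, hb, rfl⟩
      exact gr.mul_mem ha hb
    · -- the hard inclusion
      intro c hc
      -- part 1 as a non-unital star subalgebra
      let P1 : NonUnitalStarSubalgebra ℂ A :=
        { carrier := (gr.part 1 : Set A)
          add_mem' := fun ha hb => (gr.part 1).add_mem ha hb
          zero_mem' := (gr.part 1).zero_mem
          mul_mem' := fun ha hb => by simpa using gr.mul_mem ha hb
          smul_mem' := fun r a ha => (gr.part 1).smul_mem r ha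
          star_mem' := fun ha => by simpa using gr.star_mem ha }
      have hP1closed : IsClosed (P1 : Set A) := gr.closed 1
      -- multiplication of part (g*h) by part 1 lands in T
      have claim1 : ∀ d ∈ gr.part (g * h), ∀ e ∈ gr.part 1, d * e ∈ T := by
        intro d hd e he
        let L : A →ₗ[ℂ] A := LinearMap.mul ℂ A d
        have hLc : Continuous L := by
          show Continuous fun y : A ↦ d * y
          fun_prop
        have hP : IsClosed ((T.comap L : Submodule ℂ A) : Set A) :=
          hTclosed.preimage hLc
        have hle : gr.part 1 ≤ T.comap L := by
          rw [← H h⁻¹]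
          refine Submodule.topologicalClosure_minimal _ (Submodule.span_le.mpr ?_) hP
          rintro x ⟨a, ha, b, hb, rfl⟩
          have hda : d * a ∈ gr.part g := by
            have := gr.mul_mem hd ha
            rwa [mul_inv_cancel_right] at this
          have hbh : b ∈ gr.part h := by rwa [inv_inv] at hb
          show d * (a * b) ∈ T
          rw [← mul_assoc]
          exact Submodule.le_topologicalClosure _
            (Submodule.subset_span ⟨d * a, hda, b, hbh, rfl⟩)
        exact hle he
      have hb1 : star c * c ∈ gr.part 1 := by
        have := gr.mul_mem (gr.star_mem hc) hc
        rwa [inv_mul_cancel] at this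
      -- approximate c by c * x with x ∈ part 1
      have hcc : c ∈ closure (T : Set A) := by
        rw [Metric.mem_closure_iff]
        intro ε hε
        obtain ⟨x, hx0, hxeq, hxlt⟩ := approx_mul_cfcn c (ε := ε.toNNReal)
          (Real.toNNReal_pos.mpr hε)
        have hxmem : x ∈ gr.part 1 := by
          rw [hxeq, cfcₙ_nnreal_eq_real _ _ (star_mul_self_nonneg c)]
          exact cfcnReal_mem_of_mem P1 hP1closed hb1 _
        refine ⟨c * x, claim1 c hc x hxmem, ?_⟩
        rw [dist_eq_norm]
        calc ‖c - c * x‖ = (‖c - c * x‖₊ : ℝ) := rfl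
          _ < (ε.toNNReal : ℝ) := by exact_mod_cast hxlt
          _ = ε := Real.coe_toNNReal ε hε.le
      rwa [hTclosed.closure_eq] at hcc
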